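/- arXiv:0912.5036 — 3 statements merged into one kernel-verified Lean document; each statement's English description precedes it below -/
import Mathlib

section
/- Let α, β : [0,∞) → ℝ be differentiable with α(t) > 0 and α(t) + t·β(t) > 0 for all t ≥ 0, and suppose F(t) = (α(t)β(t) − t·(α'(t))² − 2α(t)α'(t)) / (α(t) + t·β(t)) vanishes identically. Then α(t) + t·α'(t) > 0 for all t ≥ 0. -/
/-- If F ≡ 0 on [0,∞) then α + tα' > 0 on [0,∞). -/
theorem stmt_2 (α β : ℝ → ℝ)
    (hα : ∀ t : ℝ, 0 ≤ t → DifferentiableAt ℝ α t)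
    (hβ : ∀ t : ℝ, 0 ≤ t → DifferentiableAt ℝ β t)
    (hαpos : ∀ t : ℝ, 0 ≤ t → 0 < α t)
    (hΔpos : ∀ t : ℝ, 0 ≤ t → 0 < α t + t * β t)
    (hF : ∀ t : ℝ, 0 ≤ t →
      (α t * β t - t * (deriv α t) ^ 2 - 2 * α t * deriv α t) / (α t + t * β t) = 0) :
    ∀ t : ℝ, 0 ≤ t → 0 < α t + t * deriv α t := by
  -- numerator vanishes
  have hnum : ∀ t : ℝ, 0 ≤ t →
      α t * β t - t * (deriv α t) ^ 2 - 2 * α t * deriv α t = 0 := by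
    intro t ht
    have := hF t ht
    rcases div_eq_zero_iff.1 this with h | h
    · exact h
    · exact absurd h (hΔpos t ht).ne'
  -- φ² = α(α + tβ)
  have hsq : ∀ t : ℝ, 0 ≤ t →
      (α t + t * deriv α t) ^ 2 = α t * (α t + t * β t) := by
    intro t ht
    have h := hnum t ht
    nlinarith [h]
  have hne : ∀ t : ℝ, 0 ≤ t → α t + t * deriv α t ≠ 0 := by
    intro t ht h
    have := hsq t ht
    rw [h] at this
    nlinarith [hαpos t ht, hΔpos t ht]
  intro t ht
  by_contra hle
  push_neg at hle
  have hlt : α t + t * deriv α t < 0 := lt_of_le_of_ne hle (hne t ht)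
  have ht0 : 0 < t := by
    rcases eq_or_lt_of_le ht with h | h
    · exfalso; rw [← h] at hlt; simp at hlt; exact absurd hlt (hαpos 0 le_rfl).not_gt
    · exact h
  -- g = fun x => x * α x, g' x = α x + x * deriv α x
  set g : ℝ → ℝ := fun x => x * α x with hg
  have hder : ∀ x ∈ Set.Icc (0:ℝ) t,
      HasDerivWithinAt g (α x + x * deriv α x) (Set.Icc 0 t) x := by
    intro x hx
    have hd : HasDerivAt g (1 * α x + x * deriv α x) x :=
      (hasDerivAt_id x).mul ((hα x hx.1).hasDerivAt)
    simpa using hd.hasDerivWithinAt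
  have h0 : (0:ℝ) < α 0 + 0 * deriv α 0 := by simpa using hαpos 0 le_rfl
  obtain ⟨c, hc, hceq⟩ :=
    exists_hasDerivWithinAt_eq_of_lt_of_gt ht hder (m := 0) h0 hlt
  exact hne c hc.1.le hceq
end

section
/- Let α, β : [0,∞) → ℝ be twice differentiable with α(t) > 0 and α(t) + t·β(t) > 0 for all t ≥ 0. Define F(t) = (α(t)β(t) − t·(α'(t))² − 2α(t)α'(t))/(α(t)+t·β(t)), φ(t) = α(t) + t·α'(t), Δ(t) = α(t) + t·β(t), and H(t) = φ(t)·(d/dt) ln(α(t)Δ(t)) − 2φ'(t). If F(t) = 0 for all t ≥ 0, then H(t) = 0 for all t ≥ 0. -/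
/-- If α, β are twice differentiable with α > 0 and α + tβ > 0 on [0,∞), and F ≡ 0 there,
then H ≡ 0 there. -/
theorem stmt_4 (α β : ℝ → ℝ)
    (hα : ∀ t : ℝ, 0 ≤ t → DifferentiableAt ℝ α t)
    (hα' : ∀ t : ℝ, 0 ≤ t → DifferentiableAt ℝ (deriv α) t)
    (hβ : ∀ t : ℝ, 0 ≤ t → DifferentiableAt ℝ β t)
    (hβ' : ∀ t : ℝ, 0 ≤ t → DifferentiableAt ℝ (deriv β) t)
    (hαpos : ∀ t : ℝ, 0 ≤ t → 0 < α t)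
    (hΔpos : ∀ t : ℝ, 0 ≤ t → 0 < α t + t * β t)
    (hF : ∀ t : ℝ, 0 ≤ t →
      (α t * β t - t * (deriv α t) ^ 2 - 2 * α t * deriv α t) / (α t + t * β t) = 0) :
    ∀ t : ℝ, 0 ≤ t →
      (α t + t * deriv α t) *
          deriv (fun s : ℝ => Real.log (α s * (α s + s * β s))) t -
        2 * deriv (fun s : ℝ => α s + s * deriv α s) t = 0 := by
  have key : ∀ s : ℝ, 0 ≤ s →
      α s * β s - s * (deriv α s) ^ 2 - 2 * α s * deriv α s = 0 := by
    intro s hs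
    have h := hF s hs
    rcases div_eq_zero_iff.mp h with h' | h'
    · exact h'
    · exact absurd h' (hΔpos s hs).ne'
  intro t ht
  have hA := hαpos t ht
  have hΔ := hΔpos t ht
  have Hα : HasDerivAt α (deriv α t) t := (hα t ht).hasDerivAt
  have Hα' : HasDerivAt (deriv α) (deriv (deriv α) t) t := (hα' t ht).hasDerivAt
  have Hβ : HasDerivAt β (deriv β t) t := (hβ t ht).hasDerivAt
  have Hβ' : HasDerivAt (deriv β) (deriv (deriv β) t) t := (hβ' t ht).hasDerivAt
  set a := α t with ha
  set b := β t with hb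
  set da := deriv α t with hda
  set db := deriv β t with hdb
  set dda := deriv (deriv α) t with hdda
  -- derivative of the constraint
  have Hg : HasDerivAt (fun s => α s * β s - s * (deriv α s) ^ 2 - 2 * α s * deriv α s)
      (da * b + a * db - (da ^ 2 + t * (2 * da * dda)) - (2 * da * da + 2 * a * dda)) t := by
    have h1 := ((Hα.mul Hβ).sub ((hasDerivAt_id t).mul (Hα'.pow 2))).sub
      ((Hα.const_mul 2).mul Hα')
    refine HasDerivAt.congr_deriv h1 ?_
    simp only [id_eq, Pi.pow_apply]
    ring
  have hne : t ∈ Set.Ici (0 : ℝ) := ht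
  have hd0 : da * b + a * db - (da ^ 2 + t * (2 * da * dda)) - (2 * da * da + 2 * a * dda) = 0 := by
    have hW := Hg.hasDerivWithinAt (s := Set.Ici (0 : ℝ))
    have hW0 : HasDerivWithinAt
        (fun s => α s * β s - s * (deriv α s) ^ 2 - 2 * α s * deriv α s) 0 (Set.Ici 0) t :=
      (hasDerivWithinAt_const t _ (0 : ℝ)).congr (fun s hs => key s hs) (key t ht)
    rw [← hW.derivWithin (uniqueDiffOn_Ici 0 t hne),
      hW0.derivWithin (uniqueDiffOn_Ici 0 t hne)]
  -- derivative of log(αΔ)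
  have Hinner : HasDerivAt (fun s => α s * (α s + s * β s))
      (da * (a + t * b) + a * (da + (1 * b + t * db))) t :=
    Hα.mul (Hα.add ((hasDerivAt_id t).mul Hβ))
  have Hlog : HasDerivAt (fun s : ℝ => Real.log (α s * (α s + s * β s)))
      ((da * (a + t * b) + a * (da + (1 * b + t * db))) / (a * (a + t * b))) t :=
    Hinner.log (by positivity)
  have Hφ : HasDerivAt (fun s : ℝ => α s + s * deriv α s) (da + (1 * da + t * dda)) t :=
    Hα.add ((hasDerivAt_id t).mul Hα')
  rw [Hlog.deriv, Hφ.deriv]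
  have hE1 := key t ht
  have hAΔ : a * (a + t * b) ≠ 0 := by positivity
  field_simp
  linear_combination ((a + t * da) * t) * hd0 + (a + t * da - 2 * t * (2 * da + t * dda)) * hE1
end

section
/- Let α, β : [0,∞) → ℝ be twice differentiable functions such that α(t) > 0, α(t) + t·α'(t) > 0, and α(t) + t·β(t) > 0 for all t ≥ 0. Define φ(t) = α(t) + t·α'(t), Δ(t) = α(t) + t·β(t), H(t) = φ(t)·(d/dt) ln(α(t)Δ(t)) − 2φ'(t), and F(t) = (α(t)β(t) − t·(α'(t))² − 2α(t)α'(t))/Δ(t). If H(t) = 0 for all t ≥ 0, then F(t) = 0 for all t ≥ 0. -/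
/-- If α, β are twice differentiable with α > 0, α + tα' > 0 and α + tβ > 0 on [0,∞),
and H ≡ 0 there, then F ≡ 0 there. -/
theorem stmt_5 (α β : ℝ → ℝ)
    (hα : ∀ t : ℝ, 0 ≤ t → DifferentiableAt ℝ α t)
    (hα' : ∀ t : ℝ, 0 ≤ t → DifferentiableAt ℝ (deriv α) t)
    (hβ : ∀ t : ℝ, 0 ≤ t → DifferentiableAt ℝ β t)
    (hβ' : ∀ t : ℝ, 0 ≤ t → DifferentiableAt ℝ (deriv β) t)
    (hαpos : ∀ t : ℝ, 0 ≤ t → 0 < α t)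
    (hφpos : ∀ t : ℝ, 0 ≤ t → 0 < α t + t * deriv α t)
    (hΔpos : ∀ t : ℝ, 0 ≤ t → 0 < α t + t * β t)
    (hH : ∀ t : ℝ, 0 ≤ t →
      (α t + t * deriv α t) *
          deriv (fun s : ℝ => Real.log (α s * (α s + s * β s))) t -
        2 * deriv (fun s : ℝ => α s + s * deriv α s) t = 0) :
    ∀ t : ℝ, 0 ≤ t →
      (α t * β t - t * (deriv α t) ^ 2 - 2 * α t * deriv α t) / (α t + t * β t) = 0 := by
  set g : ℝ → ℝ := fun s =>
    Real.log (α s * (α s + s * β s)) - 2 * Real.log (α s + s * deriv α s) with hg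
  have hφdiff : ∀ t : ℝ, 0 ≤ t →
      DifferentiableAt ℝ (fun s : ℝ => α s + s * deriv α s) t := fun t ht =>
    (hα t ht).add (differentiableAt_id.mul (hα' t ht))
  have hΔdiff : ∀ t : ℝ, 0 ≤ t →
      DifferentiableAt ℝ (fun s : ℝ => α s + s * β s) t := fun t ht =>
    (hα t ht).add (differentiableAt_id.mul (hβ t ht))
  have hlog1 : ∀ t : ℝ, 0 ≤ t →
      DifferentiableAt ℝ (fun s : ℝ => Real.log (α s * (α s + s * β s))) t := by
    intro t ht
    exact ((hα t ht).mul (hΔdiff t ht)).log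
      (ne_of_gt (mul_pos (hαpos t ht) (hΔpos t ht)))
  have hgdiff : ∀ t : ℝ, 0 ≤ t → DifferentiableAt ℝ g t := by
    intro t ht
    exact (hlog1 t ht).sub
      (((hφdiff t ht).log (ne_of_gt (hφpos t ht))).const_mul 2)
  have hgd : ∀ t : ℝ, 0 ≤ t → HasDerivAt g 0 t := by
    intro t ht
    have h1 : HasDerivAt (fun s : ℝ => Real.log (α s * (α s + s * β s)))
        (deriv (fun s : ℝ => Real.log (α s * (α s + s * β s))) t) t :=
      (hlog1 t ht).hasDerivAt
    have hφ : HasDerivAt (fun s : ℝ => α s + s * deriv α s)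
        (deriv (fun s : ℝ => α s + s * deriv α s) t) t :=
      (hφdiff t ht).hasDerivAt
    have h2 := hφ.log (ne_of_gt (hφpos t ht))
    have h3 := h1.sub (h2.const_mul 2)
    convert h3 using 1
    case e'_4 => rfl
    case e'_5 => rfl
    case e'_8 => rfl
    have hh := hH t ht
    have hφne : α t + t * deriv α t ≠ 0 := ne_of_gt (hφpos t ht)
    rw [eq_comm, sub_eq_zero, ← mul_div_assoc, eq_div_iff hφne]
    linarith [hh]
  have hgconst : ∀ t : ℝ, 0 ≤ t → g t = g 0 := by
    intro t ht
    have hcont : ContinuousOn g (Set.Icc 0 t) := fun x hx =>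
      ((hgdiff x hx.1).continuousAt).continuousWithinAt
    have hder : ∀ x ∈ Set.Ico (0 : ℝ) t, HasDerivWithinAt g 0 (Set.Ici x) x :=
      fun x hx => (hgd x hx.1).hasDerivWithinAt
    exact constant_of_has_deriv_right_zero hcont hder t (Set.mem_Icc.mpr ⟨ht, le_refl t⟩)
  have hg0 : g 0 = 0 := by
    have h0 : (0 : ℝ) ≤ 0 := le_refl 0
    have hαne : α 0 ≠ 0 := ne_of_gt (hαpos 0 h0)
    simp only [hg, zero_mul, add_zero]
    rw [Real.log_mul hαne hαne]
    ring
  have ident : ∀ t : ℝ, 0 ≤ t →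
      α t * (α t + t * β t) = (α t + t * deriv α t) ^ 2 := by
    intro t ht
    have h1 : g t = 0 := by rw [hgconst t ht, hg0]
    have h2 : Real.log (α t * (α t + t * β t)) =
        Real.log ((α t + t * deriv α t) ^ 2) := by
      rw [Real.log_pow]
      have := h1
      simp only [hg] at this
      push_cast
      linarith
    have hp1 : 0 < α t * (α t + t * β t) := mul_pos (hαpos t ht) (hΔpos t ht)
    have hp2 : 0 < (α t + t * deriv α t) ^ 2 := pow_pos (hφpos t ht) 2
    calc α t * (α t + t * β t) = Real.exp (Real.log (α t * (α t + t * β t))) :=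
          (Real.exp_log hp1).symm
      _ = Real.exp (Real.log ((α t + t * deriv α t) ^ 2)) := by rw [h2]
      _ = (α t + t * deriv α t) ^ 2 := Real.exp_log hp2
  have key : ∀ t : ℝ, 0 < t →
      α t * β t - t * (deriv α t) ^ 2 - 2 * α t * deriv α t = 0 := by
    intro t ht
    have h := ident t ht.le
    have h2 : t * (α t * β t - t * (deriv α t) ^ 2 - 2 * α t * deriv α t) = 0 := by
      nlinarith [h]
    rcases mul_eq_zero.mp h2 with h3 | h3
    · exact absurd h3 (ne_of_gt ht)
    · exact h3
  have key0 : α 0 * β 0 - 0 * (deriv α 0) ^ 2 - 2 * α 0 * deriv α 0 = 0 := by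
    set k : ℝ → ℝ := fun s => α s * β s - s * (deriv α s) ^ 2 - 2 * α s * deriv α s with hk
    have hkc : ContinuousAt k 0 := by
      have h0 : (0 : ℝ) ≤ 0 := le_refl 0
      exact (((hα 0 h0).continuousAt.mul (hβ 0 h0).continuousAt).sub
        (continuousAt_id.mul ((hα' 0 h0).continuousAt.pow 2))).sub
        ((continuousAt_const.mul (hα 0 h0).continuousAt).mul (hα' 0 h0).continuousAt)
    have h1 : Filter.Tendsto k (nhdsWithin 0 (Set.Ioi 0)) (nhds (k 0)) :=
      (hkc.tendsto).mono_left nhdsWithin_le_nhds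
    have h2 : Filter.Tendsto k (nhdsWithin 0 (Set.Ioi 0)) (nhds 0) := by
      apply Filter.Tendsto.congr' _ tendsto_const_nhds
      exact Filter.eventuallyEq_of_mem self_mem_nhdsWithin
        (fun x hx => (key x hx).symm)
    have := tendsto_nhds_unique h1 h2
    simpa [hk] using this
  intro t ht
  rw [div_eq_zero_iff]
  left
  rcases eq_or_lt_of_le ht with h | h
  · rw [← h]; exact key0
  · exact key t h
end
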